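/- For i.i.d. Bernoulli(p) trials with 0<p<1 and every 0<x<1, lim_{n→∞} (1/log_{1/p} n) ln[ -ln P(L(n)/log_{1/p} n ≤ 1-x) ] = x ln(1/p). -/

import Mathlib

set_option maxHeartbeats 1000000

open MeasureTheory ProbabilityTheory Filter Set
open scoped ENNReal Classical

/-- The longest run of `true`s among the first `n` trials `X 0, ..., X (n-1)`. -/
noncomputable def longestRun (X : ℕ → Bool) (n : ℕ) : ℕ :=
  (Finset.range (n + 1)).sup fun ℓ =>
    if ∃ i, i + ℓ ≤ n ∧ ∀ j < ℓ, X (i + j) = true then ℓ else 0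

def hasRun (Y : ℕ → Bool) (n ℓ : ℕ) : Prop :=
  ∃ i, i + ℓ ≤ n ∧ ∀ j < ℓ, Y (i + j) = true

lemma hasRun_mono_len {Y : ℕ → Bool} {n ℓ ℓ' : ℕ} (h : hasRun Y n ℓ) (hle : ℓ' ≤ ℓ) :
    hasRun Y n ℓ' := by
  obtain ⟨i, hi, hj⟩ := h
  exact ⟨i, le_trans (by omega) hi, fun j hj' => hj j (lt_of_lt_of_le hj' hle)⟩

lemma hasRun_mono_n {Y : ℕ → Bool} {n m ℓ : ℕ} (h : hasRun Y n ℓ) (hnm : n ≤ m) :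
    hasRun Y m ℓ := by
  obtain ⟨i, hi, hj⟩ := h
  exact ⟨i, le_trans hi hnm, hj⟩

lemma le_longestRun {Y : ℕ → Bool} {n k : ℕ} (h : hasRun Y n k) : k ≤ longestRun Y n := by
  obtain ⟨i, hi, hj⟩ := h
  have hk : k ∈ Finset.range (n + 1) := Finset.mem_range.mpr (by omega)
  have := Finset.le_sup (f := fun ℓ =>
    if ∃ i, i + ℓ ≤ n ∧ ∀ j < ℓ, Y (i + j) = true then ℓ else 0) hk
  simp only [if_pos (⟨i, hi, hj⟩ : ∃ i, i + k ≤ n ∧ ∀ j < k, Y (i + j) = true)] at this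
  exact this

lemma longestRun_lt_iff {Y : ℕ → Bool} {n k : ℕ} (hk : 0 < k) :
    longestRun Y n < k ↔ ¬ hasRun Y n k := by
  constructor
  · intro h hr
    exact absurd (le_longestRun hr) (by omega)
  · intro h
    rw [longestRun, Finset.sup_lt_iff (by simpa using hk)]
    intro ℓ _
    split_ifs with hc
    · by_contra hlt
      exact h (hasRun_mono_len hc (by omega))
    · exact hk

lemma longestRun_mono {Y : ℕ → Bool} {n m : ℕ} (hnm : n ≤ m) :
    longestRun Y n ≤ longestRun Y m := by
  rcases Nat.eq_zero_or_pos (longestRun Y n) with h | h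
  · omega
  · have : hasRun Y n (longestRun Y n) := by
      by_contra hc
      have := (longestRun_lt_iff h).mpr hc
      omega
    exact le_longestRun (hasRun_mono_n this hnm)

lemma measurableSet_finite_pi {ι : Type*} [Finite ι] (A : Set (ι → Bool)) :
    MeasurableSet A := by
  have hsing : ∀ f : ι → Bool, MeasurableSet ({f} : Set (ι → Bool)) := by
    intro f
    have : ({f} : Set (ι → Bool)) = ⋂ i, (fun g : ι → Bool => g i) ⁻¹' {f i} := by
      ext g; simp [funext_iff]
    rw [this]
    exact MeasurableSet.iInter fun i => (measurable_pi_apply i) (by trivial)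
  have : A = ⋃ f ∈ A, {f} := by simp
  rw [this]
  exact MeasurableSet.biUnion (Set.to_countable A) fun f _ => hsing f

lemma hasRun_congr {Y Z : ℕ → Bool} {n k : ℕ} (h : ∀ i < n, Y i = Z i) :
    hasRun Y n k ↔ hasRun Z n k := by
  constructor <;> rintro ⟨i, hi, hj⟩ <;> refine ⟨i, hi, fun j hjk => ?_⟩
  · rw [← h (i + j) (by omega)]; exact hj j hjk
  · rw [h (i + j) (by omega)]; exact hj j hjk

section
variable {Ω : Type*} [MeasurableSpace Ω] (μ : Measure Ω) [IsProbabilityMeasure μ]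
    (X : ℕ → Ω → Bool) {p : ℝ}

/-- the event that there is no success run of length `k` in the first `n` trials -/
def Eset (X : ℕ → Ω → Bool) (n k : ℕ) : Set Ω := {ω | ¬ hasRun (fun i => X i ω) n k}

lemma Eset_eq_preimage (n k : ℕ) :
    Eset X n k = (fun ω (i : Finset.range n) => X i ω) ⁻¹'
      {v : {i // i ∈ Finset.range n} → Bool |
        ¬ hasRun (fun i => if h : i < n then v ⟨i, Finset.mem_range.mpr h⟩ else false) n k} := by
  ext ω
  simp only [Eset, Set.mem_setOf_eq, Set.mem_preimage]
  constructor <;> intro h hc <;> apply h <;> refine (hasRun_congr fun i hi => ?_).mp hc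
  · simp [hi]
  · simp [hi]

omit [IsProbabilityMeasure μ] in
lemma cyl_eq_preimage (t : Finset ℕ) (b : ℕ → Bool) :
    (⋂ i ∈ t, X i ⁻¹' {b i}) =
      (fun ω (i : t) => X i ω) ⁻¹' {v : {i // i ∈ t} → Bool | ∀ i : {i // i ∈ t}, v i = b i} := by
  ext ω
  simp [Set.mem_iInter]

omit [IsProbabilityMeasure μ] in
lemma cyl_meas (hindep : iIndepFun X μ) (t : Finset ℕ) (b : ℕ → Bool) :
    μ (⋂ i ∈ t, X i ⁻¹' {b i}) = ∏ i ∈ t, μ (X i ⁻¹' {b i}) := by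
  exact hindep.meas_biInter fun i _ => ⟨{b i}, trivial, rfl⟩

omit [IsProbabilityMeasure μ] in
lemma meas_true (hdist : ∀ i, μ {ω | X i ω = true} = ENNReal.ofReal p) (i : ℕ) :
    μ (X i ⁻¹' {true}) = ENNReal.ofReal p := by
  have : X i ⁻¹' {true} = {ω | X i ω = true} := by ext ω; simp
  rw [this, hdist i]

lemma meas_false (hmeas : ∀ i, Measurable (X i))
    (hdist : ∀ i, μ {ω | X i ω = true} = ENNReal.ofReal p) (i : ℕ) :
    μ (X i ⁻¹' {false}) = 1 - ENNReal.ofReal p := by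
  have h1 : X i ⁻¹' {false} = (X i ⁻¹' {true})ᶜ := by
    ext ω; cases h : X i ω <;> simp [h]
  rw [h1, measure_compl ((hmeas i) (by trivial)) (measure_ne_top μ _), meas_true μ X hdist i,
    measure_univ]

omit [IsProbabilityMeasure μ] in
lemma indep_past_cyl (hmeas : ∀ i, Measurable (X i))
    (hindep : iIndepFun X μ)
    (a k : ℕ) (t : Finset ℕ) (ht : ∀ i ∈ t, a ≤ i) (b : ℕ → Bool) :
    μ (Eset X a k ∩ ⋂ i ∈ t, X i ⁻¹' {b i}) =
      μ (Eset X a k) * μ (⋂ i ∈ t, X i ⁻¹' {b i}) := by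
  have hst : Disjoint (Finset.range a) t := by
    rw [Finset.disjoint_left]
    intro i hi hit
    exact absurd (ht i hit) (by simp at hi; omega)
  have h := (hindep.indepFun_finset (Finset.range a) t hst hmeas)
  rw [cyl_eq_preimage, Eset_eq_preimage]
  exact h.measure_inter_preimage_eq_mul _ _ (measurableSet_finite_pi _) (measurableSet_finite_pi _)
end

section
variable {Ω : Type*} [MeasurableSpace Ω] (μ : Measure Ω) [IsProbabilityMeasure μ]
    (X : ℕ → Ω → Bool) {p : ℝ}


omit [IsProbabilityMeasure μ] in
lemma Eset_measurable (hmeas : ∀ i, Measurable (X i)) (n k : ℕ) :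
    MeasurableSet (Eset X n k) := by
  rw [Eset_eq_preimage]
  have hv : Measurable (fun ω (i : {i // i ∈ Finset.range n}) => X i ω) :=
    measurable_pi_lambda _ fun i => hmeas i
  exact hv (measurableSet_finite_pi _)

lemma Eset_anti {n m k : ℕ} (hnm : n ≤ m) : Eset X m k ⊆ Eset X n k := by
  intro ω h hc
  obtain ⟨i, hi, hj⟩ := hc
  exact h ⟨i, le_trans hi hnm, hj⟩

/-- window finset -/
def win (a k : ℕ) : Finset ℕ := Finset.image (fun j => a + j) (Finset.range k)

lemma mem_win {a k i : ℕ} : i ∈ win a k ↔ ∃ j < k, i = a + j := by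
  simp [win, eq_comm]

omit [IsProbabilityMeasure μ] in
lemma meas_win (hindep : iIndepFun X μ)
    (hdist : ∀ i, μ {ω | X i ω = true} = ENNReal.ofReal p) (a k : ℕ) :
    μ (⋂ i ∈ win a k, X i ⁻¹' {(true : Bool)}) = (ENNReal.ofReal p) ^ k := by
  rw [cyl_meas μ X hindep (win a k) (fun _ => true)]
  rw [win, Finset.prod_image (by intro x _ y _ h; simp only at h; omega)]
  simp [meas_true μ X hdist]

/-- lower recursion: `μ(E_b) ≤ μ(E_{b+1}) + μ(E_a) p^k` where `a + k = b + 1`. -/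
lemma rec_lower (hmeas : ∀ i, Measurable (X i))
    (hindep : iIndepFun X μ)
    (hdist : ∀ i, μ {ω | X i ω = true} = ENNReal.ofReal p)
    {a b k : ℕ} (hk : 1 ≤ k) (hab : a + k = b + 1) :
    μ (Eset X b k) ≤ μ (Eset X (b + 1) k) + μ (Eset X a k) * (ENNReal.ofReal p) ^ k := by
  set W := ⋂ i ∈ win a k, X i ⁻¹' {(true : Bool)} with hW
  have hsub : Eset X b k ⊆ Eset X (b + 1) k ∪ (Eset X a k ∩ W) := by
    intro ω h
    by_cases hω : hasRun (fun i => X i ω) (b + 1) k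
    · right
      obtain ⟨i, hik, hrun⟩ := hω
      have hia : i = a := by
        by_contra hne
        have : i + k ≤ b := by
          rcases Nat.lt_or_ge (i + k) (b + 1) with h' | h'
          · omega
          · omega
        exact h ⟨i, this, hrun⟩
      subst hia
      refine ⟨Eset_anti X (by omega) h, ?_⟩
      simp only [hW, Set.mem_iInter]
      intro i hi
      rw [mem_win] at hi
      obtain ⟨j, hjk, rfl⟩ := hi
      exact hrun j hjk
    · left; exact hω
  calc μ (Eset X b k) ≤ μ (Eset X (b + 1) k ∪ (Eset X a k ∩ W)) := measure_mono hsub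
    _ ≤ μ (Eset X (b + 1) k) + μ (Eset X a k ∩ W) := measure_union_le _ _
    _ = μ (Eset X (b + 1) k) + μ (Eset X a k) * (ENNReal.ofReal p) ^ k := by
        rw [hW, indep_past_cyl μ X hmeas hindep a k (win a k)
          (fun i hi => by rw [mem_win] at hi; omega) (fun _ => true),
          meas_win μ X hindep hdist]

/-- upper recursion -/
lemma rec_upper (hmeas : ∀ i, Measurable (X i))
    (hindep : iIndepFun X μ)
    (hdist : ∀ i, μ {ω | X i ω = true} = ENNReal.ofReal p)
    {a k : ℕ} (hk : 1 ≤ k) :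
    μ (Eset X (a + k + 1) k) + μ (Eset X a k) * ((1 - ENNReal.ofReal p) * (ENNReal.ofReal p) ^ k)
      ≤ μ (Eset X (a + k) k) := by
  set t : Finset ℕ := insert a (win (a + 1) k) with htdef
  set bb : ℕ → Bool := fun i => decide (i ≠ a) with hbb
  set D : Set Ω := Eset X a k ∩ ⋂ i ∈ t, X i ⁻¹' {bb i} with hD
  have hanotin : a ∉ win (a + 1) k := by
    rw [mem_win]; rintro ⟨j, hj, h⟩; omega
  have hmeasD : μ D = μ (Eset X a k) * ((1 - ENNReal.ofReal p) * (ENNReal.ofReal p) ^ k) := by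
    rw [hD, indep_past_cyl μ X hmeas hindep a k t
      (fun i hi => by rw [htdef, Finset.mem_insert, mem_win] at hi; rcases hi with h|⟨j,_,h⟩ <;> omega) bb,
      cyl_meas μ X hindep t bb, htdef, Finset.prod_insert hanotin]
    have h1 : (X a ⁻¹' {bb a}) = X a ⁻¹' {false} := by rw [hbb]; simp
    rw [h1, meas_false μ X hmeas hdist a]
    congr 1
    rw [win, Finset.prod_image (by intro x _ y _ h; simp only at h; omega)]
    have : ∀ j ∈ Finset.range k, μ (X (a + 1 + j) ⁻¹' {bb (a + 1 + j)}) = ENNReal.ofReal p := by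
      intro j _
      have : bb (a + 1 + j) = true := by rw [hbb]; simp; omega
      rw [this, meas_true μ X hdist]
    rw [Finset.prod_congr rfl this, Finset.prod_const]
    simp
  -- D is disjoint from E_{a+k+1} and contained in E_{a+k}
  have hdisj : Disjoint (Eset X (a + k + 1) k) D := by
    rw [Set.disjoint_left]
    intro ω hE hDω
    apply hE
    refine ⟨a + 1, by omega, fun j hj => ?_⟩
    have := hDω.2
    simp only [Set.mem_iInter] at this
    have h := this (a + 1 + j) (by rw [htdef, Finset.mem_insert, mem_win]; right; exact ⟨j, hj, rfl⟩)
    have hb : bb (a + 1 + j) = true := by rw [hbb]; simp; omega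
    rw [hb] at h
    exact h
  have hsubD : D ⊆ Eset X (a + k) k := by
    rintro ω ⟨hEa, hcyl⟩ ⟨i, hik, hrun⟩
    simp only [Set.mem_iInter] at hcyl
    rcases Nat.lt_or_ge a (i + k) with h' | h'
    · rcases Nat.lt_or_ge a i with h'' | h''
      · -- i ≥ a + 1 and i + k ≤ a + k gives i ≤ a, contradiction
        omega
      · -- a ∈ [i, i + k), so X a ω = true, but cylinder forces false
        have h1 : X a ω = true := by
          have := hrun (a - i) (by omega)
          simpa [show i + (a - i) = a by omega] using this
        have h2 := hcyl a (by rw [htdef]; exact Finset.mem_insert_self a _)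
        have hb : bb a = false := by rw [hbb]; simp
        rw [hb] at h2
        simp only [Set.mem_preimage, Set.mem_singleton_iff] at h2
        rw [h1] at h2
        exact Bool.noConfusion h2
    · exact hEa ⟨i, h', hrun⟩
  have hmeasSetD : MeasurableSet D := by
    apply (Eset_measurable X hmeas a k).inter
    exact MeasurableSet.biInter (Set.to_countable _) fun i _ => (hmeas i) (by trivial)
  rw [← hmeasD]
  calc μ (Eset X (a + k + 1) k) + μ D = μ (Eset X (a + k + 1) k ∪ D) :=
        (measure_union hdisj hmeasSetD).symm
    _ ≤ μ (Eset X (a + k) k) := measure_mono (Set.union_subset (Eset_anti X (by omega)) hsubD)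
end

lemma run_ratio_abstract (q : ℕ → ℝ) (P : ℝ) (k : ℕ) (hk : 1 ≤ k)
    (hq0 : ∀ n, 0 ≤ q n) (hstart : ∀ n, n < k → q n = 1) (hqk : 1 - P ≤ q k)
    (hrec : ∀ a b, a + k = b + 1 → q b ≤ q (b + 1) + q a * P)
    (hP0 : 0 ≤ P) (hP1 : 2 * P ≤ 1) (hhalf : 1 / 2 ≤ (1 - 2 * P) ^ (k - 1)) :
    ∀ m, (1 - 2 * P) * q m ≤ q (m + 1) := by
  intro m
  induction m using Nat.strong_induction_on with
  | _ m IH =>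
    rcases lt_trichotomy (m + 1) k with h | h | h
    · rw [hstart m (by omega), hstart (m + 1) h]
      nlinarith
    · rw [hstart m (by omega)]
      rw [h]
      nlinarith
    · -- m + 1 > k
      set a := m + 1 - k with ha
      have hab : a + k = m + 1 := by omega
      have hchain : ∀ d, a + d ≤ m → (1 - 2 * P) ^ d * q a ≤ q (a + d) := by
        intro d
        induction d with
        | zero => simp
        | succ d IHd =>
          intro hdm
          have h1 : (1 - 2 * P) ^ d * q a ≤ q (a + d) := IHd (by omega)
          have h2 : (1 - 2 * P) * q (a + d) ≤ q (a + d + 1) := IH (a + d) (by omega)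
          calc (1 - 2 * P) ^ (d + 1) * q a = (1 - 2 * P) * ((1 - 2 * P) ^ d * q a) := by ring
            _ ≤ (1 - 2 * P) * q (a + d) := by nlinarith
            _ ≤ q (a + d + 1) := h2
      have hch := hchain (k - 1) (by omega)
      rw [show a + (k - 1) = m by omega] at hch
      have hq2 : q a ≤ 2 * q m := by nlinarith [hq0 a]
      have hr := hrec a m hab
      nlinarith [hq0 m]

lemma run_lower_abstract (q : ℕ → ℝ) (P : ℝ) (k : ℕ) (hk : 1 ≤ k)
    (hq0 : ∀ n, 0 ≤ q n) (hstart : ∀ n, n < k → q n = 1) (hqk : 1 - P ≤ q k)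
    (hrec : ∀ a b, a + k = b + 1 → q b ≤ q (b + 1) + q a * P)
    (hP0 : 0 ≤ P) (hP1 : 2 * P ≤ 1) (hhalf : 1 / 2 ≤ (1 - 2 * P) ^ (k - 1)) :
    ∀ n, (1 - 2 * P) ^ n ≤ q n := by
  have hratio := run_ratio_abstract q P k hk hq0 hstart hqk hrec hP0 hP1 hhalf
  intro n
  induction n with
  | zero => simp [hstart 0 (by omega)]
  | succ n IHn =>
    calc (1 - 2 * P) ^ (n + 1) = (1 - 2 * P) * (1 - 2 * P) ^ n := by ring
      _ ≤ (1 - 2 * P) * q n := by nlinarith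
      _ ≤ q (n + 1) := hratio n

lemma run_upper_abstract (q : ℕ → ℝ) (c : ℝ) (k : ℕ)
    (hqk : q k ≤ 1) (hanti : ∀ m n : ℕ, m ≤ n → q n ≤ q m) (hq0 : ∀ n, 0 ≤ q n)
    (hc0 : 0 ≤ c) (hc1 : c ≤ 1)
    (hrec : ∀ a, q (a + k + 1) + q a * c ≤ q (a + k)) :
    ∀ j, q (k + j) ≤ (1 - c) ^ j := by
  intro j
  induction j with
  | zero => simpa using hqk
  | succ j IHj =>
    have h1 := hrec j
    rw [show j + k + 1 = k + (j + 1) by omega, show j + k = k + j by omega] at h1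
    have h2 : q (k + j) ≤ q j := hanti j (k + j) (by omega)
    have : q (k + (j + 1)) ≤ (1 - c) * q (k + j) := by
      nlinarith [hq0 j, hq0 (k + j)]
    calc q (k + (j + 1)) ≤ (1 - c) * q (k + j) := this
      _ ≤ (1 - c) * (1 - c) ^ j := by nlinarith [hq0 (k + j)]
      _ = (1 - c) ^ (j + 1) := by ring

section
variable {Ω : Type*} [MeasurableSpace Ω] (μ : Measure Ω) [IsProbabilityMeasure μ]
    (X : ℕ → Ω → Bool) {p : ℝ}


lemma q_bounds (hp0 : 0 < p) (hp1 : p < 1) (hmeas : ∀ i, Measurable (X i))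
    (hindep : iIndepFun X μ)
    (hdist : ∀ i, μ {ω | X i ω = true} = ENNReal.ofReal p)
    {k n : ℕ} (hk : 1 ≤ k) (hkn : k ≤ n)
    (hP1 : 2 * p ^ k ≤ 1) (hhalf : 1 / 2 ≤ (1 - 2 * p ^ k) ^ (k - 1)) :
    (1 - 2 * p ^ k) ^ n ≤ (μ (Eset X n k)).toReal ∧
      (μ (Eset X n k)).toReal ≤ (1 - (1 - p) * p ^ k) ^ (n - k) := by
  set q : ℕ → ℝ := fun n => (μ (Eset X n k)).toReal with hq
  have hfin : ∀ m, μ (Eset X m k) ≠ ⊤ := fun m => measure_ne_top μ _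
  have hfinp : (ENNReal.ofReal p) ^ k ≠ ⊤ := ENNReal.pow_ne_top ENNReal.ofReal_ne_top
  have hfinsub : (1 - ENNReal.ofReal p) ≠ ⊤ := ENNReal.sub_ne_top (by simp)
  have hofp : (ENNReal.ofReal p).toReal = p := ENNReal.toReal_ofReal hp0.le
  have hq0 : ∀ m, 0 ≤ q m := fun m => ENNReal.toReal_nonneg
  have hq1 : ∀ m, q m ≤ 1 := fun m => by
    simpa [hq] using ENNReal.toReal_mono (by simp) (prob_le_one (μ := μ) (s := Eset X m k))
  have hanti : ∀ m n : ℕ, m ≤ n → q n ≤ q m := fun m n hmn =>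
    ENNReal.toReal_mono (hfin m) (measure_mono (Eset_anti X hmn))
  have hstart : ∀ m, m < k → q m = 1 := by
    intro m hm
    have : Eset X m k = Set.univ := by
      ext ω; simp only [Eset, Set.mem_setOf_eq, Set.mem_univ, iff_true]
      rintro ⟨i, hik, -⟩; omega
    simp [hq, this]
  have hqk : 1 - p ^ k ≤ q k := by
    have hsub : Set.univ ⊆ Eset X k k ∪ ⋂ i ∈ win 0 k, X i ⁻¹' {(true : Bool)} := by
      intro ω _
      by_cases hω : hasRun (fun i => X i ω) k k
      · right
        obtain ⟨i, hik, hrun⟩ := hω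
        have : i = 0 := by omega
        subst this
        simp only [Set.mem_iInter]
        intro i hi
        rw [mem_win] at hi
        obtain ⟨j, hjk, rfl⟩ := hi
        simpa using hrun j hjk
      · left; exact hω
    have h1 : (1 : ℝ≥0∞) ≤ μ (Eset X k k) + (ENNReal.ofReal p) ^ k := by
      calc (1 : ℝ≥0∞) = μ Set.univ := (measure_univ).symm
        _ ≤ μ (Eset X k k ∪ ⋂ i ∈ win 0 k, X i ⁻¹' {(true : Bool)}) := measure_mono hsub
        _ ≤ μ (Eset X k k) + μ (⋂ i ∈ win 0 k, X i ⁻¹' {(true : Bool)}) := measure_union_le _ _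
        _ = μ (Eset X k k) + (ENNReal.ofReal p) ^ k := by rw [meas_win μ X hindep hdist]
    have h2 := ENNReal.toReal_mono (ENNReal.add_ne_top.mpr ⟨hfin k, hfinp⟩) h1
    rw [ENNReal.toReal_one, ENNReal.toReal_add (hfin k) hfinp,
      ENNReal.toReal_pow, hofp] at h2
    linarith
  have hrecl : ∀ a b, a + k = b + 1 → q b ≤ q (b + 1) + q a * p ^ k := by
    intro a b hab
    have h := rec_lower μ X hmeas hindep hdist hk hab
    have h2 := ENNReal.toReal_mono
      (ENNReal.add_ne_top.mpr ⟨hfin _, ENNReal.mul_ne_top (hfin _) hfinp⟩) h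
    rwa [ENNReal.toReal_add (hfin _) (ENNReal.mul_ne_top (hfin _) hfinp), ENNReal.toReal_mul,
      ENNReal.toReal_pow, hofp] at h2
  have hrecu : ∀ a, q (a + k + 1) + q a * ((1 - p) * p ^ k) ≤ q (a + k) := by
    intro a
    have h := rec_upper μ X hmeas hindep hdist (a := a) hk
    have h2 := ENNReal.toReal_mono (hfin _) h
    rw [ENNReal.toReal_add (hfin _) (ENNReal.mul_ne_top (hfin _) (ENNReal.mul_ne_top hfinsub hfinp)),
      ENNReal.toReal_mul, ENNReal.toReal_mul, ENNReal.toReal_pow,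
      ENNReal.toReal_sub_of_le (by simpa using hp1.le) (by simp), ENNReal.toReal_one, hofp] at h2
    exact h2
  have hPpos : 0 < p ^ k := pow_pos hp0 k
  constructor
  · exact run_lower_abstract q (p ^ k) k hk hq0 hstart hqk hrecl hPpos.le hP1 hhalf n
  · have hc0 : 0 ≤ (1 - p) * p ^ k := by nlinarith
    have hc1 : (1 - p) * p ^ k ≤ 1 := by nlinarith [pow_le_one₀ hp0.le hp1.le (n := k)]
    have := run_upper_abstract q ((1 - p) * p ^ k) k (hq1 k) hanti hq0 hc0 hc1 hrecu (n - k)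
    rwa [show k + (n - k) = n by omega] at this
end

noncomputable def kk (p x : ℝ) (n : ℕ) : ℕ :=
  ⌊(1 - x) * (Real.log n / Real.log (1 / p))⌋₊ + 1

lemma tail_tendsto {p x : ℝ} (hp0 : 0 < p) (hp1 : p < 1) (hx0 : 0 < x) (hx1 : x < 1)
    (q : ℕ → ℝ)
    (hbound : ∀ n, kk p x n ≤ n → 2 * p ^ (kk p x n) ≤ 1 →
      1 / 2 ≤ (1 - 2 * p ^ (kk p x n)) ^ (kk p x n - 1) →
      (1 - 2 * p ^ (kk p x n)) ^ n ≤ q n ∧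
        q n ≤ (1 - (1 - p) * p ^ (kk p x n)) ^ (n - kk p x n)) :
    Tendsto (fun n : ℕ => (Real.log n / Real.log (1 / p))⁻¹ * Real.log (-Real.log (q n)))
      atTop (nhds (x * Real.log (1 / p))) := by
  set c := Real.log (1 / p) with hcdef
  have hc : 0 < c := Real.log_pos (one_lt_one_div hp0 hp1)
  have hlogp : Real.log p = -c := by
    rw [hcdef, one_div, Real.log_inv]; ring
  set K : ℕ → ℕ := kk p x
  set D : ℕ → ℝ := fun n => Real.log n with hDdef
  have hDtop : Tendsto D atTop atTop :=
    Real.tendsto_log_atTop.comp tendsto_natCast_atTop_atTop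
  have hx1' : (0:ℝ) < 1 - x := by linarith
  -- limit lemmas
  have T2 : Tendsto (fun n : ℕ => (n:ℝ) ^ (x - 1)) atTop (nhds 0) := by
    have := (tendsto_rpow_neg_atTop hx1').comp (tendsto_natCast_atTop_atTop (R := ℝ))
    simpa [show -(1 - x) = x - 1 by ring, Function.comp_def] using this
  have T1 : Tendsto (fun n : ℕ => D n * (n:ℝ) ^ (x - 1)) atTop (nhds 0) := by
    have h1 := (isLittleO_log_rpow_atTop hx1').tendsto_div_nhds_zero
    have h2 := h1.comp (tendsto_natCast_atTop_atTop (R := ℝ))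
    apply h2.congr'
    filter_upwards [eventually_ge_atTop 1] with n hn
    have hn0 : (0:ℝ) < n := by exact_mod_cast hn
    simp only [Function.comp]
    rw [div_eq_mul_inv, ← Real.rpow_neg hn0.le, show -(1 - x) = x - 1 by ring]
  -- bounds on K
  have hKub : ∀ n : ℕ, 1 ≤ n → (K n : ℝ) ≤ (1 - x) / c * D n + 1 := by
    intro n hn
    have h0 : 0 ≤ (1 - x) * (D n / c) := by
      have : 0 ≤ D n := Real.log_natCast_nonneg n
      positivity
    have := Nat.floor_le h0
    have : (K n : ℝ) ≤ (1 - x) * (D n / c) + 1 := by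
      simp only [K, kk, Nat.cast_add, Nat.cast_one]
      exact (add_le_add_iff_right 1).mpr this
    calc (K n : ℝ) ≤ (1 - x) * (D n / c) + 1 := this
      _ = (1 - x) / c * D n + 1 := by ring
  have hKlb : ∀ n : ℕ, (1 - x) / c * D n < (K n : ℝ) := by
    intro n
    have h := Nat.lt_floor_add_one ((1 - x) * (D n / c))
    have he : (K n : ℝ) = (⌊(1 - x) * (D n / c)⌋₊ : ℝ) + 1 := by
      simp only [K, kk, Nat.cast_add, Nat.cast_one]
      rfl
    rw [he]
    calc (1 - x) / c * D n = (1 - x) * (D n / c) := by ring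
      _ < ⌊(1 - x) * (D n / c)⌋₊ + 1 := h
  -- P bounds
  have hPub : ∀ n : ℕ, 1 ≤ n → p ^ (K n) ≤ (n:ℝ) ^ (x - 1) := by
    intro n hn
    have hn0 : (0:ℝ) < n := by exact_mod_cast hn
    have h1 : (p:ℝ) ^ (K n) = Real.exp (Real.log p * K n) := by
      rw [← Real.rpow_natCast p (K n), Real.rpow_def_of_pos hp0]
    have h2 : (n:ℝ) ^ (x - 1) = Real.exp (Real.log n * (x - 1)) := Real.rpow_def_of_pos hn0 _
    rw [h1, h2]
    apply Real.exp_le_exp.mpr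
    have hK := hKlb n
    have : Real.log p * K n ≤ Real.log p * ((1 - x) / c * D n) := by
      rw [hlogp]
      nlinarith [hKlb n]
    calc Real.log p * K n ≤ Real.log p * ((1 - x) / c * D n) := this
      _ = -c * ((1 - x) / c * D n) := by rw [hlogp]
      _ = Real.log n * (x - 1) := by field_simp; ring
  have hPlb : ∀ n : ℕ, 1 ≤ n → p * (n:ℝ) ^ (x - 1) ≤ p ^ (K n) := by
    intro n hn
    have hn0 : (0:ℝ) < n := by exact_mod_cast hn
    have h1 : (p:ℝ) ^ (K n) = Real.exp (Real.log p * K n) := by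
      rw [← Real.rpow_natCast p (K n), Real.rpow_def_of_pos hp0]
    have h2 : p * (n:ℝ) ^ (x - 1) = Real.exp (Real.log p + Real.log n * (x - 1)) := by
      rw [Real.exp_add, ← Real.rpow_def_of_pos hn0, Real.exp_log hp0]
    rw [h1, h2]
    apply Real.exp_le_exp.mpr
    have hK := hKub n hn
    rw [hlogp]
    have hD' : c * ((1 - x) / c * D n) = (1 - x) * D n := by field_simp
    nlinarith [hK, hc, hD']
  -- K * n^(x-1) → 0
  have T3 : Tendsto (fun n : ℕ => (K n : ℝ) * (n:ℝ) ^ (x - 1)) atTop (nhds 0) := by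
    have hup : Tendsto (fun n : ℕ => ((1 - x) / c) * (D n * (n:ℝ) ^ (x - 1)) + (n:ℝ) ^ (x - 1))
        atTop (nhds 0) := by
      have := (T1.const_mul ((1 - x) / c)).add T2
      simpa using this
    apply tendsto_of_tendsto_of_tendsto_of_le_of_le' tendsto_const_nhds hup
    · filter_upwards [eventually_ge_atTop 1] with n hn
      have hn0 : (0:ℝ) < n := by exact_mod_cast hn
      positivity
    · filter_upwards [eventually_ge_atTop 1] with n hn
      have hn0 : (0:ℝ) < n := by exact_mod_cast hn
      have := hKub n hn
      have hr : (0:ℝ) ≤ (n:ℝ) ^ (x - 1) := by positivity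
      nlinarith
  -- eventual smallness
  have E1 : ∀ᶠ n : ℕ in atTop, (K n : ℝ) * (n:ℝ) ^ (x - 1) ≤ 1 / 8 := by
    have := T3.eventually (eventually_le_nhds (show (0:ℝ) < 1/8 by norm_num))
    exact this
  have E2 : ∀ᶠ n : ℕ in atTop, 2 * K n ≤ n := by
    set A := (1 - x) / c with hA
    have hA0 : 0 < A := by positivity
    have h := (Real.isLittleO_log_id_atTop.comp_tendsto
      (tendsto_natCast_atTop_atTop (R := ℝ))).def (show (0:ℝ) < 1/(4*A) by positivity)
    filter_upwards [h, eventually_ge_atTop 4] with n hn hn4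
    have hn1 : 1 ≤ n := by omega
    have hn0 : (0:ℝ) < n := by exact_mod_cast hn1
    have hn4' : (4:ℝ) ≤ n := by exact_mod_cast hn4
    simp only [Function.comp, id_eq, Real.norm_eq_abs] at hn
    have hDn : 0 ≤ D n := Real.log_natCast_nonneg n
    have habs : |Real.log (n:ℝ)| = D n := abs_of_nonneg hDn
    have habs2 : |(n:ℝ)| = n := abs_of_nonneg hn0.le
    rw [habs, habs2] at hn
    have hAD : A * D n ≤ (n:ℝ)/4 := by
      have := mul_le_mul_of_nonneg_left hn (le_of_lt hA0)
      calc A * D n ≤ A * (1/(4*A) * n) := this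
        _ = (n:ℝ)/4 := by field_simp
    have hKr : (K n : ℝ) ≤ (n:ℝ)/2 := by
      have := hKub n hn1
      nlinarith
    have : (2 * K n : ℝ) ≤ (n:ℝ) := by push_cast; linarith
    exact_mod_cast this
  -- pointwise bounds on r n := -log (q n)
  set C1 : ℝ := (1 - p) * p / 2 with hC1
  have hC1pos : 0 < C1 := by rw [hC1]; nlinarith
  have Emain : ∀ᶠ n : ℕ in atTop,
      C1 * (n:ℝ) ^ x ≤ -Real.log (q n) ∧ -Real.log (q n) ≤ 4 * (n:ℝ) ^ x := by
    filter_upwards [E1, E2, eventually_ge_atTop 3] with n h8 h2K hn3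
    have hn1 : 1 ≤ n := by omega
    have hn0 : (0:ℝ) < n := by exact_mod_cast hn1
    set P : ℝ := p ^ K n with hP
    have hPpos : 0 < P := pow_pos hp0 _
    have hK1 : 1 ≤ K n := by simp [K, kk]
    have hK0 : (1:ℝ) ≤ (K n : ℝ) := by exact_mod_cast hK1
    have hKP : (K n : ℝ) * P ≤ 1/8 := by
      have := hPub n hn1
      nlinarith
    have hP8 : P ≤ 1/8 := by nlinarith
    have side1 : 2 * P ≤ 1 := by linarith
    have side2 : 1/2 ≤ (1 - 2*P) ^ (K n - 1) := by
      have hb := one_add_mul_le_pow (a := -(2*P)) (by linarith) (K n - 1)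
      have hc1 : ((K n - 1 : ℕ) : ℝ) = (K n : ℝ) - 1 := by
        push_cast [Nat.cast_sub hK1]; ring
      have : 1 + ((K n - 1 : ℕ) : ℝ) * (-(2*P)) ≤ (1 + -(2*P)) ^ (K n - 1) := hb
      rw [hc1] at this
      calc (1:ℝ)/2 ≤ 1 + ((K n:ℝ) - 1) * (-(2*P)) := by nlinarith
        _ ≤ (1 + -(2*P)) ^ (K n - 1) := this
        _ = (1 - 2*P) ^ (K n - 1) := by ring_nf
    have hKn : K n ≤ n := by omega
    obtain ⟨B1, B2⟩ := hbound n hKn side1 side2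
    have h12 : (0:ℝ) < 1 - 2*P := by linarith
    have hqpos : 0 < q n := lt_of_lt_of_le (pow_pos h12 n) B1
    have hnx : (n:ℝ) ^ (x - 1) * (n:ℝ) = (n:ℝ) ^ x := by
      rw [← Real.rpow_add_one (ne_of_gt hn0) (x-1)]; norm_num
    constructor
    · -- lower bound on r
      have hpP : (1-p)*P ≤ P := mul_le_of_le_one_left hPpos.le (by linarith)
      have hPp : (0:ℝ) < 1 - (1-p)*P := by linarith
      have hlogq : Real.log (q n) ≤ ((n - K n : ℕ):ℝ) * Real.log (1 - (1-p)*P) := by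
        have := Real.log_le_log hqpos B2
        rwa [Real.log_pow] at this
      have h1mp : Real.log (1 - (1-p)*P) ≤ -((1-p)*P) := by
        have := Real.log_le_sub_one_of_pos hPp
        linarith
      have hcast : ((n - K n : ℕ):ℝ) = (n:ℝ) - (K n:ℝ) := by
        push_cast [Nat.cast_sub hKn]; ring
      have hnK2 : (n:ℝ)/2 ≤ (n:ℝ) - (K n:ℝ) := by
        have : (2 * K n : ℝ) ≤ (n:ℝ) := by exact_mod_cast h2K
        push_cast at this ⊢; linarith
      have hr1 : Real.log (q n) ≤ ((n:ℝ) - (K n:ℝ)) * (-((1-p)*P)) := by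
        rw [hcast] at hlogq
        calc Real.log (q n) ≤ ((n:ℝ) - (K n:ℝ)) * Real.log (1 - (1-p)*P) := hlogq
          _ ≤ ((n:ℝ) - (K n:ℝ)) * (-((1-p)*P)) := by
              apply mul_le_mul_of_nonneg_left h1mp
              linarith
      have hPlbn := hPlb n hn1
      have hfin : C1 * (n:ℝ)^x ≤ ((n:ℝ) - (K n:ℝ)) * ((1-p)*P) := by
        have h1 : ((n:ℝ)/2) * ((1-p)*(p * (n:ℝ)^(x-1))) ≤ ((n:ℝ) - (K n:ℝ)) * ((1-p)*P) := by
          have hr0 : (0:ℝ) ≤ (n:ℝ)^(x-1) := Real.rpow_nonneg hn0.le _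
          apply mul_le_mul hnK2 _ _ (by linarith)
          · nlinarith [hPlbn]
          · nlinarith
        calc C1 * (n:ℝ)^x = ((n:ℝ)/2) * ((1-p)*(p * (n:ℝ)^(x-1))) := by
              rw [hC1, ← hnx]; ring
          _ ≤ _ := h1
      linarith [hr1, hfin]
    · -- upper bound on r
      have hlogq : (n:ℝ) * Real.log (1 - 2*P) ≤ Real.log (q n) := by
        have := Real.log_le_log (pow_pos h12 n) B1
        rwa [Real.log_pow] at this
      have hlog1m : -(4*P) ≤ Real.log (1 - 2*P) := by
        have hinv := Real.log_le_sub_one_of_pos (inv_pos.mpr h12)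
        rw [Real.log_inv] at hinv
        have hiv : (1 - 2*P)⁻¹ ≤ 1 + 4*P := by
          rw [← one_div, div_le_iff₀ h12]
          nlinarith
        linarith
      have : -Real.log (q n) ≤ (n:ℝ) * (4*P) := by nlinarith
      have hPub' := hPub n hn1
      calc -Real.log (q n) ≤ (n:ℝ) * (4*P) := this
        _ ≤ (n:ℝ) * (4 * (n:ℝ)^(x-1)) := by nlinarith
        _ = 4 * (n:ℝ)^x := by rw [← hnx]; ring
  -- squeeze
  have hDinv : Tendsto (fun n : ℕ => (D n)⁻¹) atTop (nhds 0) := hDtop.inv_tendsto_atTop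
  have hG1 : Tendsto (fun n : ℕ => c * Real.log C1 * (D n)⁻¹ + x * c) atTop (nhds (x * c)) := by
    have := (hDinv.const_mul (c * Real.log C1)).add_const (x * c)
    simpa using this
  have hG2 : Tendsto (fun n : ℕ => c * Real.log 4 * (D n)⁻¹ + x * c) atTop (nhds (x * c)) := by
    have := (hDinv.const_mul (c * Real.log 4)).add_const (x * c)
    simpa using this
  apply tendsto_of_tendsto_of_tendsto_of_le_of_le' hG1 hG2
  · filter_upwards [Emain, eventually_ge_atTop 3] with n ⟨hl, hu⟩ hn3
    have hn0 : (0:ℝ) < n := by positivity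
    have hn1 : (1:ℝ) < n := by exact_mod_cast (by omega : 1 < n)
    have hD0 : 0 < D n := Real.log_pos hn1
    have hrpos : 0 < -Real.log (q n) := lt_of_lt_of_le (by positivity) hl
    have hlr : Real.log C1 + x * D n ≤ Real.log (-Real.log (q n)) := by
      have := Real.log_le_log (by positivity) hl
      rwa [Real.log_mul (ne_of_gt hC1pos) (by positivity), Real.log_rpow hn0] at this
    have heq : c * Real.log C1 * (D n)⁻¹ + x * c =
        (D n / c)⁻¹ * (Real.log C1 + x * D n) := by
      field_simp
    rw [heq]
    apply mul_le_mul_of_nonneg_left hlr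
    positivity
  · filter_upwards [Emain, eventually_ge_atTop 3] with n ⟨hl, hu⟩ hn3
    have hn0 : (0:ℝ) < n := by positivity
    have hn1 : (1:ℝ) < n := by exact_mod_cast (by omega : 1 < n)
    have hD0 : 0 < D n := Real.log_pos hn1
    have hrpos : 0 < -Real.log (q n) := lt_of_lt_of_le (by positivity) hl
    have hur : Real.log (-Real.log (q n)) ≤ Real.log 4 + x * D n := by
      have := Real.log_le_log hrpos hu
      rwa [Real.log_mul (by norm_num) (by positivity), Real.log_rpow hn0] at this
    have heq : c * Real.log 4 * (D n)⁻¹ + x * c =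
        (D n / c)⁻¹ * (Real.log 4 + x * D n) := by
      field_simp
    rw [heq]
    apply mul_le_mul_of_nonneg_left hur
    positivity

theorem longestRun_lower_tail_near_nominal
    {Ω : Type*} [MeasurableSpace Ω] (μ : Measure Ω) [IsProbabilityMeasure μ]
    (X : ℕ → Ω → Bool) (p : ℝ) (hp0 : 0 < p) (hp1 : p < 1)
    (hmeas : ∀ i, Measurable (X i))
    (hindep : iIndepFun X μ)
    (hdist : ∀ i, μ {ω | X i ω = true} = ENNReal.ofReal p)
    (x : ℝ) (hx0 : 0 < x) (hx1 : x < 1) :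
    Tendsto (fun n : ℕ =>
        (Real.log n / Real.log (1 / p))⁻¹ *
          Real.log (-(Real.log ((μ {ω |
            (longestRun (fun i => X i ω) n : ℝ) / (Real.log n / Real.log (1 / p)) ≤ 1 - x}).toReal))))
      atTop (nhds (x * Real.log (1 / p))) := by
  set q : ℕ → ℝ := fun n => (μ (Eset X n (kk p x n))).toReal with hqdef
  have hbound : ∀ n, kk p x n ≤ n → 2 * p ^ (kk p x n) ≤ 1 →
      1 / 2 ≤ (1 - 2 * p ^ (kk p x n)) ^ (kk p x n - 1) →
      (1 - 2 * p ^ (kk p x n)) ^ n ≤ q n ∧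
        q n ≤ (1 - (1 - p) * p ^ (kk p x n)) ^ (n - kk p x n) := by
    intro n h1 h2 h3
    exact q_bounds μ X hp0 hp1 hmeas hindep hdist (by simp [kk]) h1 h2 h3
  have htt := tail_tendsto hp0 hp1 hx0 hx1 q hbound
  apply htt.congr'
  filter_upwards [eventually_ge_atTop 2] with n hn2
  have hn1 : (1:ℝ) < n := by exact_mod_cast (by omega : 1 < n)
  have hl : 0 < Real.log n / Real.log (1 / p) :=
    div_pos (Real.log_pos hn1) (Real.log_pos (one_lt_one_div hp0 hp1))
  have hset : {ω | (longestRun (fun i => X i ω) n : ℝ) /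
      (Real.log n / Real.log (1 / p)) ≤ 1 - x} = Eset X n (kk p x n) := by
    ext ω
    set L := longestRun (fun i => X i ω) n with hL
    set ℓ : ℝ := Real.log n / Real.log (1 / p) with hℓ
    have h0 : (0:ℝ) ≤ (1 - x) * ℓ := by nlinarith
    simp only [Set.mem_setOf_eq, Eset]
    rw [div_le_iff₀ hl, ← Nat.le_floor_iff h0,
      show ((1 - x) * ℓ) = ((1 - x) * (Real.log n / Real.log (1 / p))) from rfl]
    rw [show (L ≤ ⌊(1 - x) * (Real.log ↑n / Real.log (1 / p))⌋₊) ↔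
        (L < kk p x n) from by simp only [kk]; omega]
    rw [longestRun_lt_iff (show 0 < kk p x n by simp [kk])]
  rw [hset]
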